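/- Let μ > 0, v_+ < 0, r_0 > 0, and let ψ : [r_0, ∞) → ℝ be continuous with ψ − v_+ ∈ L¹([r_0, ∞)). Let f ∈ C¹([r_0, ∞)) satisfy f(r_0) < 0, f′ < 0 on (r_0, ∞), and f′ ∈ L¹([r_0, ∞)). Define A(r) = exp((1/μ)∫_{r_0}^r ψ(s) ds) and B(r) = ∫_r^∞ |f(s)| A(s) ds. Then B(r) ≤ (μ(|f(r_0)| + ‖f′‖_{L¹})/|v_+|) · exp((1/μ)‖ψ − v_+‖_{L¹} − (|v_+|/μ)(r − r_0)) for all r ≥ r_0, and in particular B(r) → 0 as r → ∞. -/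

import Mathlib

open MeasureTheory Filter Real

lemma exp_decay_integral (a : ℝ) {c : ℝ} (hc : 0 < c) :
    ∫ x in Set.Ioi a, Real.exp (-c * x) = Real.exp (-c * a) / c := by
  have hderiv : ∀ x ∈ Set.Ici a,
      HasDerivAt (fun x => -Real.exp (-c * x) / c) (Real.exp (-c * x)) x := by
    intro x _
    have h := (((hasDerivAt_id x).const_mul (-c)).exp).neg.div_const c
    refine h.congr_deriv ?_
    simp only [id]; field_simp
  have htend : Tendsto (fun x => -Real.exp (-c * x) / c) atTop (nhds (-0 / c)) := by
    have h1 : Tendsto (fun x : ℝ => -c * x) atTop atBot :=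
      tendsto_id.const_mul_atTop_of_neg (neg_neg_iff_pos.2 hc)
    exact ((Real.tendsto_exp_atBot.comp h1).neg).div_const c
  have := integral_Ioi_of_hasDerivAt_of_tendsto' hderiv (exp_neg_integrableOn_Ioi a hc) htend
  rw [this]
  field_simp; ring

theorem stmt_3 (μ vp r0 : ℝ) (hμ : 0 < μ) (hvp : vp < 0) (hr0 : 0 < r0)
    (ψ : ℝ → ℝ) (hψc : ContinuousOn ψ (Set.Ici r0))
    (hψint : MeasureTheory.IntegrableOn (fun s => ψ s - vp) (Set.Ici r0))
    (f f' : ℝ → ℝ) (hf : ∀ r ∈ Set.Ici r0, HasDerivAt f (f' r) r)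
    (hf'c : ContinuousOn f' (Set.Ici r0))
    (hfr0 : f r0 < 0) (hf'neg : ∀ r, r0 < r → f' r < 0)
    (hf'int : MeasureTheory.IntegrableOn f' (Set.Ici r0))
    (A B : ℝ → ℝ)
    (hA : ∀ r, A r = Real.exp ((1 / μ) * ∫ s in r0..r, ψ s))
    (hB : ∀ r, B r = ∫ s in Set.Ici r, |f s| * A s) :
    (∀ r, r0 ≤ r → B r ≤ μ * (|f r0| + ∫ s in Set.Ici r0, |f' s|) / |vp| *
      Real.exp ((1 / μ) * (∫ s in Set.Ici r0, |ψ s - vp|) - (|vp| / μ) * (r - r0))) ∧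
    Filter.Tendsto B Filter.atTop (nhds 0) := by
  have hvp' : |vp| = -vp := abs_of_neg hvp
  set K : ℝ := ∫ s in Set.Ici r0, |ψ s - vp| with hK
  set M : ℝ := |f r0| + ∫ s in Set.Ici r0, |f' s| with hM
  set c : ℝ := |vp| / μ with hc
  have hcpos : 0 < c := div_pos (abs_pos.mpr hvp.ne) hμ
  have hKnn : 0 ≤ K := setIntegral_nonneg measurableSet_Ici fun s _ => abs_nonneg _
  have hMnn : 0 ≤ M :=
    add_nonneg (abs_nonneg _) (setIntegral_nonneg measurableSet_Ici fun s _ => abs_nonneg _)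
  -- bound on |f|
  have hfbd : ∀ s, r0 ≤ s → |f s| ≤ M := by
    intro s hs
    have hsub : Set.uIcc r0 s ⊆ Set.Ici r0 := by
      rw [Set.uIcc_of_le hs]; exact fun x hx => hx.1
    have hint : IntervalIntegrable f' volume r0 s := (hf'c.mono hsub).intervalIntegrable
    have hftc : ∫ t in r0..s, f' t = f s - f r0 :=
      intervalIntegral.integral_eq_sub_of_hasDerivAt (fun x hx => hf x (hsub hx)) hint
    have h1 : |f s| ≤ |f r0| + |∫ t in r0..s, f' t| := by
      have : f s = f r0 + ∫ t in r0..s, f' t := by rw [hftc]; ring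
      rw [this]; exact abs_add_le _ _
    have h2 : |∫ t in r0..s, f' t| ≤ ∫ t in r0..s, |f' t| :=
      intervalIntegral.abs_integral_le_integral_abs hs
    have h3 : (∫ t in r0..s, |f' t|) ≤ ∫ t in Set.Ici r0, |f' t| := by
      rw [intervalIntegral.integral_of_le hs]
      refine setIntegral_mono_set hf'int.abs ?_ ?_
      · exact Filter.Eventually.of_forall fun x => abs_nonneg _
      · exact HasSubset.Subset.eventuallyLE fun x hx => le_of_lt hx.1
    rw [hM]; linarith
  -- bound on A
  have hAbd : ∀ s, r0 ≤ s → A s ≤ Real.exp ((1 / μ) * K - c * (s - r0)) := by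
    intro s hs
    rw [hA]
    apply Real.exp_le_exp.mpr
    have hsub : Set.uIcc r0 s ⊆ Set.Ici r0 := by
      rw [Set.uIcc_of_le hs]; exact fun x hx => hx.1
    have hψi : IntervalIntegrable ψ volume r0 s := (hψc.mono hsub).intervalIntegrable
    have hψvi : IntervalIntegrable (fun t => ψ t - vp) volume r0 s :=
      hψi.sub intervalIntegrable_const
    have hsplit : (∫ t in r0..s, ψ t) = (∫ t in r0..s, (ψ t - vp)) + vp * (s - r0) := by
      have h := intervalIntegral.integral_sub hψi (intervalIntegrable_const (c := vp))
      rw [intervalIntegral.integral_const] at h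
      simp only [smul_eq_mul] at h
      linarith [h]
    have hXK : (∫ t in r0..s, (ψ t - vp)) ≤ K := by
      refine le_trans (le_abs_self _) (le_trans
        (intervalIntegral.abs_integral_le_integral_abs hs) ?_)
      rw [intervalIntegral.integral_of_le hs]
      refine setIntegral_mono_set hψint.abs ?_ ?_
      · exact Filter.Eventually.of_forall fun x => abs_nonneg _
      · exact HasSubset.Subset.eventuallyLE fun x hx => le_of_lt hx.1
    rw [hsplit]
    have hcvp : c * (s - r0) = -(vp / μ * (s - r0)) := by
      rw [hc, hvp']; ring
    have h1μ : 0 < 1 / μ := by positivity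
    rw [hcvp]
    have := mul_le_mul_of_nonneg_left hXK h1μ.le
    have hsgn : 1 / μ * ((∫ t in r0..s, (ψ t - vp)) + vp * (s - r0))
        = 1 / μ * (∫ t in r0..s, (ψ t - vp)) + vp / μ * (s - r0) := by ring
    rw [hsgn]; linarith
  -- the dominating function
  set g : ℝ → ℝ := fun s => M * Real.exp ((1 / μ) * K + c * r0) * Real.exp (-c * s) with hg
  have hgeq : ∀ s, g s = M * Real.exp ((1 / μ) * K - c * (s - r0)) := by
    intro s
    rw [hg]
    simp only
    rw [mul_assoc, ← Real.exp_add]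
    ring_nf
  have hgint : ∀ r, IntegrableOn g (Set.Ici r) := by
    intro r
    rw [integrableOn_Ici_iff_integrableOn_Ioi]
    exact ((exp_neg_integrableOn_Ioi r hcpos).const_mul _)
  have hgval : ∀ r, (∫ s in Set.Ici r, g s)
      = M / c * Real.exp ((1 / μ) * K - c * (r - r0)) := by
    intro r
    rw [integral_Ici_eq_integral_Ioi]
    rw [hg]
    simp only
    rw [integral_const_mul, exp_decay_integral r hcpos]
    have he : Real.exp ((1 / μ) * K + c * r0) * Real.exp (-c * r)
        = Real.exp ((1 / μ) * K - c * (r - r0)) := by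
      rw [← Real.exp_add]; ring_nf
    calc M * Real.exp ((1 / μ) * K + c * r0) * (Real.exp (-c * r) / c)
        = M / c * (Real.exp ((1 / μ) * K + c * r0) * Real.exp (-c * r)) := by ring
      _ = M / c * Real.exp ((1 / μ) * K - c * (r - r0)) := by rw [he]
  -- nonnegativity of B
  have hBnn : ∀ r, 0 ≤ B r := by
    intro r
    rw [hB]
    exact setIntegral_nonneg measurableSet_Ici fun s _ =>
      mul_nonneg (abs_nonneg _) (by rw [hA]; exact (Real.exp_pos _).le)
  -- main bound
  have hmain : ∀ r, r0 ≤ r → B r ≤ M / c * Real.exp ((1 / μ) * K - c * (r - r0)) := by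
    intro r hr
    rw [← hgval r, hB]
    have hnorm : ‖∫ s in Set.Ici r, |f s| * A s‖ ≤ ∫ s in Set.Ici r, g s := by
      refine norm_integral_le_of_norm_le (hgint r) ?_
      rw [ae_restrict_iff' measurableSet_Ici]
      refine Filter.Eventually.of_forall fun s hs => ?_
      have hs' : r0 ≤ s := le_trans hr hs
      have hApos : 0 ≤ A s := by rw [hA]; exact (Real.exp_pos _).le
      rw [Real.norm_eq_abs, abs_of_nonneg (mul_nonneg (abs_nonneg _) hApos), hgeq s]
      exact mul_le_mul (hfbd s hs') (hAbd s hs') hApos hMnn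
    calc (∫ s in Set.Ici r, |f s| * A s) ≤ ‖∫ s in Set.Ici r, |f s| * A s‖ := le_abs_self _
    _ ≤ ∫ s in Set.Ici r, g s := hnorm
  have hcoef : μ * M / |vp| = M / c := by
    rw [hc]; field_simp
  constructor
  · intro r hr
    have := hmain r hr
    rw [hcoef]
    exact this
  · -- tendsto
    have htend : Tendsto (fun r => M / c * Real.exp ((1 / μ) * K - c * (r - r0)))
        atTop (nhds 0) := by
      rw [show (0 : ℝ) = M / c * 0 by ring]
      refine Tendsto.const_mul _ ?_
      refine Real.tendsto_exp_atBot.comp ?_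
      have h1 : Tendsto (fun r : ℝ => c * (r - r0)) atTop atTop := by
        refine Tendsto.const_mul_atTop hcpos ?_
        exact tendsto_atTop_add_const_right _ _ tendsto_id
      have h2 : Tendsto (fun r : ℝ => -(c * (r - r0))) atTop atBot := tendsto_neg_atTop_atBot.comp h1
      have h3 : Tendsto (fun r : ℝ => (1 / μ) * K + -(c * (r - r0))) atTop atBot :=
        tendsto_atBot_add_const_left _ _ h2
      refine h3.congr fun r => by ring
    refine squeeze_zero' (Filter.eventually_atTop.2 ⟨r0, fun r _ => hBnn r⟩)
      (Filter.eventually_atTop.2 ⟨r0, fun r hr => hmain r hr⟩) htend
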